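/- Let X be a real Banach space, K ⊆ X a cone with nonempty interior, and L : X → X a strongly positive bounded linear operator. Let y ∈ K \ {0} and let λ be a real number with λ > r(L), where r(L) = lim_{n→∞} ‖Lⁿ‖^{1/n}. Then the equation λ·z − L z = y has a unique solution z ∈ X, and this solution lies in the interior of K. -/

import Mathlib

open Filter Pointwise

/-- Let `X` be a real Banach space, `K ⊆ X` a cone with nonempty
interior, and `L : X →L[ℝ] X` strongly positive.  Let `y ∈ K \ {0}` and let `λ > r(L)`,
where `r(L) = lim ‖Lⁿ‖^{1/n}` (Gelfand's formula).  Then `λ • z - L z = y` has a unique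
solution `z ∈ X`, and this solution lies in the interior of `K`. -/
theorem resolvent_equation_above_spectral_radius
    {X : Type*} [NormedAddCommGroup X] [NormedSpace ℝ X] [CompleteSpace X]
    (K : Set X)
    (hKne : K.Nonempty)
    (hKclosed : IsClosed K)
    (hKconv : Convex ℝ K)
    (hKscale : ∀ t : ℝ, 0 ≤ t → ∀ y ∈ K, t • y ∈ K)
    (hKsalient : ∀ y ∈ K, -y ∈ K → y = 0)
    (hKint : (interior K).Nonempty)
    (L : X →L[ℝ] X)
    (hLsp : ∀ y ∈ K, y ≠ 0 → L y ∈ interior K)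
    (r : ℝ)
    (hr : Filter.Tendsto (fun n : ℕ => ‖L ^ n‖ ^ ((n : ℝ)⁻¹)) Filter.atTop (nhds r))
    (y : X) (hyK : y ∈ K) (hy0 : y ≠ 0)
    (lam : ℝ) (hlam : r < lam) :
    (∃! z : X, lam • z - L z = y) ∧ (∀ z : X, lam • z - L z = y → z ∈ interior K) := by
  -- basic positivity facts
  have hr0 : 0 ≤ r := by
    refine ge_of_tendsto' hr fun n => ?_
    exact Real.rpow_nonneg (norm_nonneg _) _
  have hlam0 : 0 < lam := lt_of_le_of_lt hr0 hlam
  obtain ⟨ρ, hρr, hρlam⟩ := exists_between hlam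
  have hρ0 : 0 < ρ := lt_of_le_of_lt hr0 hρr
  -- eventual bound ‖L^n‖ ≤ ρ^n
  have hbound : ∀ᶠ n : ℕ in atTop, ‖L ^ n‖ ≤ ρ ^ n := by
    have h1 : ∀ᶠ n : ℕ in atTop, ‖L ^ n‖ ^ ((n : ℝ)⁻¹) < ρ :=
      hr.eventually (tendsto_id.eventually_lt_const hρr)
    filter_upwards [h1, eventually_ge_atTop 1] with n hn hn1
    have hnR : (0 : ℝ) < (n : ℝ) := by exact_mod_cast hn1
    have h2 := Real.rpow_le_rpow (Real.rpow_nonneg (norm_nonneg (L ^ n)) _) hn.le hnR.le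
    rwa [← Real.rpow_mul (norm_nonneg _), inv_mul_cancel₀ hnR.ne', Real.rpow_one,
      Real.rpow_natCast] at h2
  -- K contains 0 and is closed under addition
  obtain ⟨x₀, hx₀⟩ := hKne
  have hK0 : (0 : X) ∈ K := by
    have := hKscale 0 le_rfl x₀ hx₀; simpa using this
  have hKadd : ∀ a ∈ K, ∀ b ∈ K, a + b ∈ K := by
    intro a ha b hb
    have hmid : (1/2 : ℝ) • a + (1/2 : ℝ) • b ∈ K :=
      hKconv ha hb (by norm_num) (by norm_num) (by norm_num)
    have h := hKscale 2 (by norm_num) _ hmid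
    have h2 : (2 : ℝ) • ((1/2 : ℝ) • a + (1/2 : ℝ) • b) = a + b := by
      rw [smul_add, smul_smul, smul_smul]; norm_num
    rwa [h2] at h
  -- L maps K into K
  have hLK : ∀ x ∈ K, L x ∈ K := by
    intro x hx
    by_cases h : x = 0
    · simpa [h] using hK0
    · exact interior_subset (hLsp x hx h)
  have hLnK : ∀ n : ℕ, (L ^ n) y ∈ K := by
    intro n
    induction n with
    | zero => simpa using hyK
    | succ n ih =>
      have h : (L ^ (n+1)) y = L ((L ^ n) y) := by rw [pow_succ']; rfl
      rw [h]; exact hLK _ ih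
  -- the candidate series
  set f : ℕ → X := fun n => (lam⁻¹) ^ (n+1) • (L ^ n) y with hfdef
  set g : ℕ → X := fun n => (lam⁻¹) ^ n • (L ^ n) y with hgdef
  have hfK : ∀ n, f n ∈ K := fun n =>
    hKscale _ (pow_nonneg (inv_nonneg.mpr hlam0.le) _) _ (hLnK n)
  have hsum : Summable f := by
    have hgeo : Summable (fun n : ℕ => (lam⁻¹ * ‖y‖) * (ρ / lam) ^ n) := by
      refine Summable.mul_left _ (summable_geometric_of_lt_one ?_ ?_)
      · positivity
      · rw [div_lt_one hlam0]; exact hρlam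
    refine hgeo.of_norm_bounded_eventually_nat ?_
    filter_upwards [hbound] with n hn
    have h1 : ‖f n‖ = (lam⁻¹) ^ (n+1) * ‖(L ^ n) y‖ := by
      rw [hfdef]
      rw [norm_smul, Real.norm_eq_abs, abs_pow, abs_inv, abs_of_pos hlam0]
    rw [h1]
    have h2 : ‖(L ^ n) y‖ ≤ ρ ^ n * ‖y‖ := by
      calc ‖(L ^ n) y‖ ≤ ‖L ^ n‖ * ‖y‖ := (L ^ n).le_opNorm y
        _ ≤ ρ ^ n * ‖y‖ := by gcongr
    calc (lam⁻¹) ^ (n+1) * ‖(L ^ n) y‖ ≤ (lam⁻¹) ^ (n+1) * (ρ ^ n * ‖y‖) := by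
          gcongr
      _ = (lam⁻¹ * ‖y‖) * (ρ / lam) ^ n := by
          rw [pow_succ, div_pow]
          field_simp
          ring_nf
          rw [← mul_pow, mul_inv_cancel₀ hlam0.ne', one_pow]
  set z : X := ∑' n, f n with hzdef
  have hcoef : ∀ n : ℕ, lam * lam⁻¹ ^ (n+1) = lam⁻¹ ^ n := by
    intro n
    rw [pow_succ, mul_comm (lam⁻¹ ^ n), ← mul_assoc, mul_inv_cancel₀ hlam0.ne', one_mul]
  have hgf : ∀ n, g n = lam • f n := by
    intro n
    rw [hgdef, hfdef, smul_smul, hcoef]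
  have hgsum : Summable g := by
    simpa [funext hgf] using hsum.const_smul lam
  have hLf : ∀ n, L (f n) = g (n+1) := by
    intro n
    rw [hfdef, hgdef, map_smul]
    congr 1
    rw [pow_succ']; rfl
  -- z solves the equation
  have hzsol : lam • z - L z = y := by
    have hLz : L z = ∑' n, g (n+1) := by
      rw [hzdef, L.map_tsum hsum]
      exact tsum_congr hLf
    have hlamz : lam • z = ∑' n, g n := by
      rw [hzdef, ← tsum_const_smul'' lam]
      exact tsum_congr fun n => (hgf n).symm
    rw [hLz, hlamz, hgsum.tsum_eq_zero_add]
    have h0 : g 0 = y := by simp [hgdef]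
    rw [h0]; abel
  -- uniqueness of solutions
  have huniq : ∀ w : X, lam • w - L w = 0 → w = 0 := by
    intro w hw
    have hLw : L w = lam • w := (sub_eq_zero.mp hw).symm
    have hpow : ∀ n : ℕ, (L ^ n) w = lam ^ n • w := by
      intro n
      induction n with
      | zero => simp
      | succ n ih =>
        have h : (L ^ (n+1)) w = L ((L ^ n) w) := by rw [pow_succ']; rfl
        rw [h, ih, map_smul, hLw, smul_smul, ← pow_succ]
    obtain ⟨n, hb, hn1⟩ := (hbound.and (eventually_ge_atTop 1)).exists
    have h1 : lam ^ n * ‖w‖ ≤ ρ ^ n * ‖w‖ := by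
      calc lam ^ n * ‖w‖ = ‖(L ^ n) w‖ := by
            rw [hpow n, norm_smul, Real.norm_eq_abs, abs_of_pos (pow_pos hlam0 n)]
        _ ≤ ‖L ^ n‖ * ‖w‖ := (L ^ n).le_opNorm w
        _ ≤ ρ ^ n * ‖w‖ := by gcongr
    have hpl : ρ ^ n < lam ^ n :=
      pow_lt_pow_left₀ hρlam hρ0.le (by omega)
    by_contra hw0
    have hwpos : 0 < ‖w‖ := norm_pos_iff.mpr hw0
    nlinarith
  -- z lies in K
  have hzK : z ∈ K := by
    have hpartial : ∀ n : ℕ, ∑ k ∈ Finset.range n, f k ∈ K := by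
      intro n
      induction n with
      | zero => simpa using hK0
      | succ n ih =>
        rw [Finset.sum_range_succ]
        exact hKadd _ ih _ (hfK n)
    exact hKclosed.mem_of_tendsto hsum.hasSum.tendsto_sum_nat
      (Filter.Eventually.of_forall hpartial)
  have hz0 : z ≠ 0 := by
    intro h
    apply hy0
    rw [← hzsol, h]
    simp
  -- interior is stable under positive scaling and addition of elements of K
  have hsmul_int : ∀ t : ℝ, 0 < t → ∀ x ∈ interior K, t • x ∈ interior K := by
    intro t ht x hx
    have h1 : t • x ∈ t • interior K := Set.smul_mem_smul_set hx
    rw [← interior_smul₀ ht.ne' K] at h1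
    refine interior_mono ?_ h1
    rintro u ⟨v, hv, rfl⟩
    exact hKscale t ht.le v hv
  have hadd_int : ∀ k ∈ K, ∀ x ∈ interior K, k + x ∈ interior K := by
    intro k hk x hx
    have hopen : IsOpen ((Homeomorph.addLeft k) '' interior K) :=
      (Homeomorph.addLeft k).isOpen_image.mpr isOpen_interior
    have hsub : (Homeomorph.addLeft k) '' interior K ⊆ K := by
      rintro u ⟨v, hv, rfl⟩
      exact hKadd k hk v (interior_subset hv)
    have hmem : k + x ∈ (Homeomorph.addLeft k) '' interior K := ⟨x, hx, rfl⟩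
    exact interior_maximal hsub hopen hmem
  -- z lies in the interior of K
  have hzint : z ∈ interior K := by
    have hLz : L z ∈ interior K := hLsp z hzK hz0
    have h1 : lam⁻¹ • L z ∈ interior K := hsmul_int _ (inv_pos.mpr hlam0) _ hLz
    have h2 : lam⁻¹ • y ∈ K := hKscale _ (inv_nonneg.mpr hlam0.le) _ hyK
    have hzeq : z = lam⁻¹ • y + lam⁻¹ • L z := by
      have h3 : lam • z = y + L z := by
        rw [← hzsol]; abel
      calc z = lam⁻¹ • (lam • z) := by
            rw [smul_smul, inv_mul_cancel₀ hlam0.ne', one_smul]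
        _ = lam⁻¹ • y + lam⁻¹ • L z := by rw [h3, smul_add]
    rw [hzeq]
    exact hadd_int _ h2 _ h1
  -- conclusion
  have heq : ∀ w : X, lam • w - L w = y → w = z := by
    intro w hw
    have h : lam • (w - z) - L (w - z) = 0 := by
      have h4 : lam • (w - z) - L (w - z) = (lam • w - L w) - (lam • z - L z) := by
        rw [smul_sub, map_sub]; abel
      rw [h4, hw, hzsol, sub_self]
    have := huniq _ h
    exact sub_eq_zero.mp this
  exact ⟨⟨z, hzsol, heq⟩, fun w hw => (heq w hw) ▸ hzint⟩
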